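/- Let a ∈ ℝ⁴, V(p) = a − ⟨a,p⟩p, and let γ be a unit-speed conformal trajectory on S³ of V with constant q ≠ 0 that is not a geodesic, with ⟨γ(s), a⟩ = a₁ cos s + a₂ sin s. Then the curvature of γ is the constant κ = |q|·√(|a|² − a₁² − a₂²). -/

import Mathlib

def dot4 (u v : Fin 4 → ℝ) : ℝ := ∑ i, u i * v i

def det4 (u v w p : Fin 4 → ℝ) : ℝ := (Matrix.of ![u, v, w, p]).det

set_option maxHeartbeats 1000000 in
lemma det4_expand (u v w p : Fin 4 → ℝ) : det4 u v w p =
    u 0 * (v 1 * (w 2 * p 3 - w 3 * p 2) - v 2 * (w 1 * p 3 - w 3 * p 1) + v 3 * (w 1 * p 2 - w 2 * p 1))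
  - u 1 * (v 0 * (w 2 * p 3 - w 3 * p 2) - v 2 * (w 0 * p 3 - w 3 * p 0) + v 3 * (w 0 * p 2 - w 2 * p 0))
  + u 2 * (v 0 * (w 1 * p 3 - w 3 * p 1) - v 1 * (w 0 * p 3 - w 3 * p 0) + v 3 * (w 0 * p 1 - w 1 * p 0))
  - u 3 * (v 0 * (w 1 * p 2 - w 2 * p 1) - v 1 * (w 0 * p 2 - w 2 * p 0) + v 2 * (w 0 * p 1 - w 1 * p 0)) := by
  rw [det4, Matrix.det_succ_row_zero]
  simp [Fin.sum_univ_succ, Matrix.det_fin_three, Matrix.submatrix_apply, Fin.succAbove]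
  ring

def m3 (u v p : Fin 4 → ℝ) (i j k : Fin 4) : ℝ :=
  u i * (v j * p k - v k * p j) - u j * (v i * p k - v k * p i) + u k * (v i * p j - v j * p i)

def cross4 (u v p : Fin 4 → ℝ) : Fin 4 → ℝ :=
  ![m3 u v p 1 2 3, -m3 u v p 0 2 3, m3 u v p 0 1 3, -m3 u v p 0 1 2]

lemma dot4_cross (v g p w : Fin 4 → ℝ) :
    dot4 (cross4 v g p) w = det4 v g w p := by
  simp only [dot4, cross4, m3, det4_expand, Fin.sum_univ_four, Matrix.cons_val_zero,
    Matrix.cons_val_one, Matrix.head_cons, Matrix.cons_val_two, Matrix.tail_cons,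
    Matrix.cons_val_three]
  ring

lemma gram (v g p : Fin 4 → ℝ) :
    dot4 (cross4 v g p) (cross4 v g p)
    = dot4 v v * (dot4 g g * dot4 p p - dot4 g p ^ 2)
      - dot4 v g * (dot4 v g * dot4 p p - dot4 g p * dot4 v p)
      + dot4 v p * (dot4 v g * dot4 g p - dot4 g g * dot4 v p) := by
  simp only [dot4, cross4, m3, Fin.sum_univ_four, Matrix.cons_val_zero,
    Matrix.cons_val_one, Matrix.head_cons, Matrix.cons_val_two, Matrix.tail_cons,
    Matrix.cons_val_three]
  ring

lemma dot4_comm (u v : Fin 4 → ℝ) : dot4 u v = dot4 v u := by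
  simp [dot4, mul_comm]

lemma dot4_sub (u v w : Fin 4 → ℝ) : dot4 (u - v) w = dot4 u w - dot4 v w := by
  simp [dot4, Fin.sum_univ_four, sub_mul]

lemma dot4_sub_smul (a γ x : Fin 4 → ℝ) (r : ℝ) :
    dot4 (a - r • γ) x = dot4 a x - r * dot4 γ x := by
  simp [dot4, Fin.sum_univ_four]; ring

lemma dot4_self_eq_zero {v : Fin 4 → ℝ} (h : dot4 v v = 0) : v = 0 := by
  simp only [dot4, Fin.sum_univ_four] at h
  have k : ∀ i, v i * v i = 0 → v i = 0 := fun i => mul_self_eq_zero.mp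
  funext i
  fin_cases i
  · exact k 0 (by nlinarith [mul_self_nonneg (v 1), mul_self_nonneg (v 2), mul_self_nonneg (v 3)])
  · exact k 1 (by nlinarith [mul_self_nonneg (v 0), mul_self_nonneg (v 2), mul_self_nonneg (v 3)])
  · exact k 2 (by nlinarith [mul_self_nonneg (v 0), mul_self_nonneg (v 1), mul_self_nonneg (v 3)])
  · exact k 3 (by nlinarith [mul_self_nonneg (v 0), mul_self_nonneg (v 1), mul_self_nonneg (v 2)])

/-- A non-geodesic unit-speed conformal trajectory on `S³` of
`V(p) = a - ⟨a,p⟩p` with `⟨γ, a⟩ = a₁ cos s + a₂ sin s` has constant curvature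
`κ = |q| √(|a|² - a₁² - a₂²)`. -/
theorem stmt10 (I : Set ℝ) (hI : IsOpen I) (hconv : Convex ℝ I)
    (a : Fin 4 → ℝ) (q a₁ a₂ : ℝ) (hq : q ≠ 0)
    (γ g g' X : ℝ → (Fin 4 → ℝ))
    (hd1 : ∀ s ∈ I, HasDerivAt γ (g s) s)
    (hd2 : ∀ s ∈ I, HasDerivAt g (g' s) s)
    (hsph : ∀ s ∈ I, dot4 (γ s) (γ s) = 1)
    (hunit : ∀ s ∈ I, dot4 (g s) (g s) = 1)
    (hXt : ∀ s ∈ I, dot4 (X s) (γ s) = 0)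
    (hX : ∀ s ∈ I, ∀ w, dot4 w (γ s) = 0 →
      dot4 (X s) w = det4 (a - dot4 a (γ s) • γ s) (g s) w (γ s))
    (heq : ∀ s ∈ I, g' s + γ s = q • X s)
    (hgeo : ∃ s ∈ I, g' s + γ s ≠ 0)
    (hf : ∀ s ∈ I, dot4 (γ s) a = a₁ * Real.cos s + a₂ * Real.sin s) :
    ∀ s ∈ I, Real.sqrt (dot4 (g' s + γ s) (g' s + γ s))
      = |q| * Real.sqrt (dot4 a a - a₁ ^ 2 - a₂ ^ 2) := by
  intro s hs
  have hnhds : I ∈ nhds s := hI.mem_nhds hs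
  -- component derivatives
  have hcomp : ∀ i : Fin 4, HasDerivAt (fun t => γ t i) (g s i) s := fun i =>
    ((ContinuousLinearMap.proj i : (Fin 4 → ℝ) →L[ℝ] ℝ).hasFDerivAt).comp_hasDerivAt s
      (hd1 s hs)
  -- ⟨g,γ⟩ = 0
  have hgγ : dot4 (g s) (γ s) = 0 := by
    have hder : HasDerivAt (fun t => dot4 (γ t) (γ t)) (2 * dot4 (g s) (γ s)) s := by
      have h0 := (hcomp 0).mul (hcomp 0)
      have h1 := (hcomp 1).mul (hcomp 1)
      have h2 := (hcomp 2).mul (hcomp 2)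
      have h3 := (hcomp 3).mul (hcomp 3)
      have h := ((h0.add h1).add h2).add h3
      have e1 : (fun t => dot4 (γ t) (γ t))
          = fun t => γ t 0 * γ t 0 + γ t 1 * γ t 1 + γ t 2 * γ t 2 + γ t 3 * γ t 3 := by
        funext t; simp [dot4, Fin.sum_univ_four]
      rw [e1]
      refine h.congr_deriv ?_
      simp [dot4, Fin.sum_univ_four]; ring
    have hconst : HasDerivAt (fun t => dot4 (γ t) (γ t)) 0 s := by
      refine (hasDerivAt_const s (1 : ℝ)).congr_of_eventuallyEq ?_
      filter_upwards [hnhds] with t ht using hsph t ht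
    have := hder.unique hconst
    linarith
  -- ⟨g,a⟩ = -a₁ sin s + a₂ cos s
  have hga : dot4 (g s) a = -(a₁ * Real.sin s) + a₂ * Real.cos s := by
    have hder : HasDerivAt (fun t => dot4 (γ t) a) (dot4 (g s) a) s := by
      have h0 := (hcomp 0).mul_const (a 0)
      have h1 := (hcomp 1).mul_const (a 1)
      have h2 := (hcomp 2).mul_const (a 2)
      have h3 := (hcomp 3).mul_const (a 3)
      have h := ((h0.add h1).add h2).add h3
      have e1 : (fun t => dot4 (γ t) a)
          = fun t => γ t 0 * a 0 + γ t 1 * a 1 + γ t 2 * a 2 + γ t 3 * a 3 := by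
        funext t; simp [dot4, Fin.sum_univ_four]
      rw [e1]
      refine h.congr_deriv ?_
      simp [dot4, Fin.sum_univ_four]
    have htrig : HasDerivAt (fun t => a₁ * Real.cos t + a₂ * Real.sin t)
        (-(a₁ * Real.sin s) + a₂ * Real.cos s) s := by
      have := ((Real.hasDerivAt_cos s).const_mul a₁).add ((Real.hasDerivAt_sin s).const_mul a₂)
      refine this.congr_deriv ?_
      ring
    have hconst : HasDerivAt (fun t => dot4 (γ t) a)
        (-(a₁ * Real.sin s) + a₂ * Real.cos s) s := by
      refine htrig.congr_of_eventuallyEq ?_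
      filter_upwards [hnhds] with t ht using hf t ht
    exact hder.unique hconst
  -- notation
  set V : Fin 4 → ℝ := a - dot4 a (γ s) • γ s with hV
  set c : Fin 4 → ℝ := cross4 V (g s) (γ s) with hc
  have hsγ : dot4 (γ s) (γ s) = 1 := hsph s hs
  have haγ : dot4 a (γ s) = a₁ * Real.cos s + a₂ * Real.sin s := by
    rw [dot4_comm]; exact hf s hs
  have hVγ : dot4 V (γ s) = 0 := by
    rw [hV, dot4_sub_smul, hsγ]; ring
  have hVg : dot4 V (g s) = dot4 a (g s) := by
    rw [hV, dot4_sub_smul, dot4_comm (γ s) (g s), hgγ]; ring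
  have hVV : dot4 V V = dot4 a a - (dot4 a (γ s)) ^ 2 := by
    rw [hV, dot4_sub_smul, dot4_comm a (a - dot4 a (γ s) • γ s), dot4_sub_smul,
      dot4_comm (γ s) (a - dot4 a (γ s) • γ s), dot4_sub_smul, hsγ, dot4_comm (γ s) a]
    ring
  -- X s = c
  have hcγ : dot4 c (γ s) = 0 := by
    rw [hc, dot4_cross, det4_expand]; ring
  have hXc : X s = c := by
    have hdt : dot4 (X s - c) (γ s) = 0 := by
      rw [dot4_sub, hXt s hs, hcγ]; ring
    have h1 : dot4 (X s) (X s - c) = dot4 c (X s - c) := by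
      rw [hX s hs _ hdt, ← dot4_cross V (g s) (γ s) (X s - c), ← hc]
    have h2 : dot4 (X s - c) (X s - c) = 0 := by
      rw [dot4_sub, h1]; ring
    exact sub_eq_zero.mp (dot4_self_eq_zero h2)
  -- |X|^2
  have hXX : dot4 (X s) (X s) = dot4 a a - a₁ ^ 2 - a₂ ^ 2 := by
    rw [hXc, hc, gram, hsγ, hgγ, hVγ, hVV, hVg, hunit s hs, dot4_comm a (g s), hga, haγ]
    nlinarith [Real.sin_sq_add_cos_sq s]
  have hfin : dot4 (g' s + γ s) (g' s + γ s) = q ^ 2 * (dot4 a a - a₁ ^ 2 - a₂ ^ 2) := by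
    rw [heq s hs, ← hXX]
    simp [dot4, Fin.sum_univ_four]; ring
  rw [hfin, Real.sqrt_mul (sq_nonneg q), Real.sqrt_sq_eq_abs]
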